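/- Let t be an ordered labeled tree, let v1 be a non-root node of t with parent p, and let v2 be any node of t. Then pos'(v̄1) < pos'(v2) if and only if there exists a node u of t with depth(u) ≤ depth(v1) − 1 and pos(v1) < pos(u) ≤ pos(v2); equivalently, if and only if pos(v1) < pos(v2) and v2 does not lie in the subtree of p in t. -/

import Mathlib

/-- Ordered labeled trees (rose trees). -/
inductive RTree (α : Type) : Type
  | node : α → List (RTree α) → RTree α

/-- Extended binary trees: every node has an optional left and right child. -/
inductive BTree (α : Type) : Type
  | nil : BTree α
  | node : α → BTree α → BTree α → BTree α

namespace BTree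

/-- Tag sequence of an extended binary tree: opening tag, left subtree,
right subtree, closing tag.  `false` = opening tag, `true` = closing tag. -/
def btags {α : Type} : BTree α → List (α × Bool)
  | .nil => []
  | .node a l r => (a, false) :: (btags l ++ btags r ++ [(a, true)])

end BTree

namespace RTree

variable {α : Type}

def label : RTree α → α
  | .node a _ => a

def childLabels : RTree α → List α
  | .node _ cs => cs.map label

mutual
/-- Number of nodes of a tree. -/
def size : RTree α → ℕ
  | .node _ cs => 1 + sizeL cs
def sizeL : List (RTree α) → ℕ
  | [] => 0
  | c :: cs => size c + sizeL cs
end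

mutual
/-- `XML(t)`: the tag sequence of a depth-first traversal;
`(a, false)` is an opening tag, `(a, true)` a closing tag. -/
def xml : RTree α → List (α × Bool)
  | .node a cs => (a, false) :: (xmlL cs ++ [(a, true)])
def xmlL : List (RTree α) → List (α × Bool)
  | [] => []
  | c :: cs => xml c ++ xmlL cs
end

mutual
/-- XML tag sequence where each node is identified by its path
(list of child indices from the root). -/
def ptags : RTree α → List ℕ → List (List ℕ × Bool)
  | .node _ cs, p => (p, false) :: (ptagsL cs p 0 ++ [(p, true)])
def ptagsL : List (RTree α) → List ℕ → ℕ → List (List ℕ × Bool)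
  | [], _, _ => []
  | c :: cs, p, i => ptags c (p ++ [i]) ++ ptagsL cs p (i + 1)
end

/-- `XML(t)`, with nodes identified by their paths. -/
def tagList (t : RTree α) : List (List ℕ × Bool) := ptags t []

/-- `pos(v)`: (1-indexed) position of the opening tag of node `v` in `XML(t)`. -/
def posOpen (t : RTree α) (v : List ℕ) : ℕ := (tagList t).idxOf (v, false) + 1

/-- `pos(v̄)`: (1-indexed) position of the closing tag of node `v` in `XML(t)`. -/
def posClose (t : RTree α) (v : List ℕ) : ℕ := (tagList t).idxOf (v, true) + 1

/-- Subtree of `t` rooted at the node with path `p` (if any). -/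
def subtreeAt : RTree α → List ℕ → Option (RTree α)
  | t, [] => some t
  | .node _ cs, i :: p =>
    match cs[i]? with
    | some c => subtreeAt c p
    | none => none

/-- `p` is (the path of) a node of `t`. -/
def IsNode (t : RTree α) (p : List ℕ) : Prop := (subtreeAt t p).isSome

/-- First-child next-sibling encoding of a forest. -/
def fcnsL : List (RTree α) → BTree α
  | [] => .nil
  | .node a cs :: ts => .node a (fcnsL cs) (fcnsL ts)

/-- First-child next-sibling encoding `FCNS(t)`. -/
def fcns (t : RTree α) : BTree α := fcnsL [t]

/-- FCNS encoding of a forest, nodes identified by their paths in the original tree;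
`p` is the path of the parent, `i` the index of the first tree of the forest. -/
def pfcnsL : List (RTree α) → List ℕ → ℕ → BTree (List ℕ)
  | [], _, _ => .nil
  | .node _ cs :: ts, p, i =>
      .node (p ++ [i]) (pfcnsL cs (p ++ [i]) 0) (pfcnsL ts p (i + 1))

/-- `FCNS(t)`, with nodes identified by their paths in `t`. -/
def pfcns : RTree α → BTree (List ℕ)
  | .node _ cs => .node [] (pfcnsL cs [] 0) .nil

/-- `XML(FCNS(t))`, with nodes identified by their paths in `t`. -/
def btagList (t : RTree α) : List (List ℕ × Bool) := (pfcns t).btags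

/-- `pos'(v)`: position of the opening tag of `v` in `XML(FCNS(t))`. -/
def posOpen' (t : RTree α) (v : List ℕ) : ℕ := (btagList t).idxOf (v, false) + 1

/-- `pos'(v̄)`: position of the closing tag of `v` in `XML(FCNS(t))`. -/
def posClose' (t : RTree α) (v : List ℕ) : ℕ := (btagList t).idxOf (v, true) + 1

/-- A tree is valid against a DTD `D` if for every node, the word of labels of
its children belongs to `D` applied to the node's label. -/
def Valid (D : α → List α → Prop) (t : RTree α) : Prop :=
  ∀ p st, subtreeAt t p = some st → D st.label st.childLabels

end RTree

/-- `w` is a later sibling of `v` (as paths): same parent, larger last index. -/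
def LaterSib (w v : List ℕ) : Prop := ∃ q i j, v = q ++ [i] ∧ w = q ++ [j] ∧ i < j


namespace Aux
open List

abbrev LexLt (v w : List ℕ) : Prop := List.Lex (· < ·) v w

lemma lexlt_trans {a b c : List ℕ} (h1 : LexLt a b) (h2 : LexLt b c) : LexLt a c :=
  List.lt_trans (α := ℕ) h1 h2

lemma lexlt_asymm {a b : List ℕ} (h1 : LexLt a b) : ¬ LexLt b a := asymm h1

lemma lexlt_irrefl (a : List ℕ) : ¬ LexLt a a := fun h => lexlt_asymm h h

lemma lexlt_trichotomy (a b : List ℕ) : LexLt a b ∨ a = b ∨ LexLt b a :=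
  trichotomous a b

lemma lex_append_left_iff (p v w : List ℕ) : LexLt (p ++ v) (p ++ w) ↔ LexLt v w := by
  induction p with
  | nil => simp
  | cons a p ih => simpa [List.lex_cons_iff] using ih

lemma not_lex_prefix (x s : List ℕ) : ¬ LexLt (x ++ s) x := by
  induction x with
  | nil => simpa using (List.not_lex_nil (r := (· < ·)) (l := s))
  | cons a x ih => simpa [List.lex_cons_iff] using ih

lemma lex_cons_of_lt (p : List ℕ) {k k' : ℕ} (s s' : List ℕ) (h : k < k') :
    LexLt (p ++ k :: s) (p ++ k' :: s') :=
  (lex_append_left_iff p _ _).2 (List.Lex.rel h)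

lemma not_lex_cons_of_lt (p : List ℕ) {k k' : ℕ} (s s' : List ℕ) (h : k' < k) :
    ¬ LexLt (p ++ k :: s) (p ++ k' :: s') := by
  rw [lex_append_left_iff]
  intro hl
  cases hl with
  | rel h' => omega
  | cons h' => omega

lemma lex_char (v w : List ℕ) :
    LexLt v w ↔ (v <+: w ∧ v ≠ w) ∨ ∃ q i j, i < j ∧ q ++ [i] <+: v ∧ q ++ [j] <+: w := by
  induction v generalizing w with
  | nil =>
    cases w with
    | nil =>
      simp only [prefix_refl, ne_eq, not_true_eq_false, and_false, false_or]
      constructor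
      · intro h; exact absurd h (lexlt_irrefl _)
      · rintro ⟨q, i, j, hij, h1, h2⟩
        exact absurd (h1.length_le) (by simp)
    | cons b w' =>
      constructor
      · intro _; exact Or.inl ⟨nil_prefix, by simp⟩
      · intro _; exact List.Lex.nil
  | cons a v' ih =>
    cases w with
    | nil =>
      constructor
      · intro h; exact absurd h List.not_lex_nil
      · rintro (⟨h1, h2⟩ | ⟨q, i, j, hij, h1, h2⟩)
        · exact absurd h1.length_le (by simp)
        · exact absurd h2.length_le (by simp)
    | cons b w' =>
      constructor
      · intro h
        cases h with
        | rel h' => exact Or.inr ⟨[], a, b, h', by simp, by simp⟩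
        | cons h' =>
          rcases (ih w').1 h' with ⟨h1, h2⟩ | ⟨q, i, j, hij, h1, h2⟩
          · exact Or.inl ⟨by simp [cons_prefix_cons, h1], by simp [h2]⟩
          · exact Or.inr ⟨a :: q, i, j, hij, by simpa [cons_prefix_cons], by simpa [cons_prefix_cons]⟩
      · rintro (⟨h1, h2⟩ | ⟨q, i, j, hij, h1, h2⟩)
        · rw [cons_prefix_cons] at h1
          obtain ⟨rfl, h1⟩ := h1
          exact List.Lex.cons ((ih w').2 (Or.inl ⟨h1, fun h => h2 (by rw [h])⟩))
        · cases q with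
          | nil =>
            simp only [nil_append, cons_prefix_cons] at h1 h2
            obtain ⟨rfl, -⟩ := h1; obtain ⟨rfl, -⟩ := h2
            exact List.Lex.rel hij
          | cons c q' =>
            simp only [cons_append, cons_prefix_cons] at h1 h2
            obtain ⟨rfl, h1⟩ := h1; obtain ⟨rfl, h2⟩ := h2
            exact List.Lex.cons ((ih w').2 (Or.inr ⟨q', i, j, hij, h1, h2⟩))

lemma same_length_prefix_eq {l₁ l₂ l₃ : List ℕ} (h1 : l₁ <+: l₃) (h2 : l₂ <+: l₃)
    (h : l₁.length = l₂.length) : l₁ = l₂ :=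
  (prefix_of_prefix_length_le h1 h2 h.le).sublist.eq_of_length h

lemma prefix_index_unique {q : List ℕ} {i j : ℕ} {w : List ℕ}
    (h1 : q ++ [i] <+: w) (h2 : q ++ [j] <+: w) : i = j := by
  have := same_length_prefix_eq h1 h2 (by simp)
  have := append_cancel_left this
  simpa using this

lemma prefix_index_eq {p : List ℕ} {k k' : ℕ} {s : List ℕ}
    (h : p ++ [k] <+: p ++ k' :: s) : k = k' := by
  rw [prefix_append_right_inj, cons_prefix_cons] at h
  exact h.1

lemma idx_lt_blocks {β : Type} [BEq β] [LawfulBEq β] {l m : List β} {a b : β}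
    (ha : a ∈ l) (hb : b ∉ l) (hb' : b ∈ m) :
    (l ++ m).idxOf a < (l ++ m).idxOf b := by
  rw [idxOf_append_of_mem ha, idxOf_append_of_notMem hb]
  exact lt_of_lt_of_le (idxOf_lt_length_iff.2 ha) (Nat.le_add_right _ _)

end Aux

namespace Aux
open List

abbrev Tag := List ℕ × Bool
abbrev tagDecEq : DecidableEq Tag := inferInstance

lemma beq_insts : (instBEqProd : BEq Tag) = @instBEqOfDecidableEq Tag tagDecEq := by
  have h : (instBEqProd : BEq Tag).beq = (fun x y : Tag => decide (x = y)) := by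
    funext x y
    rw [Bool.eq_iff_iff, decide_eq_true_eq]
    exact beq_iff_eq
  calc (instBEqProd : BEq Tag) = ⟨(instBEqProd : BEq Tag).beq⟩ := rfl
    _ = ⟨fun x y : Tag => decide (x = y)⟩ := by rw [h]
    _ = @instBEqOfDecidableEq Tag tagDecEq := rfl

lemma tidx (a : Tag) (l : List Tag) :
    l.idxOf a = @List.idxOf Tag (@instBEqOfDecidableEq Tag tagDecEq) a l := by
  congr 1
  exact beq_insts

end Aux
namespace Aux
open List RTree

variable {α : Type}

lemma subtreeAt_node (a : α) (cs : List (RTree α)) (j : ℕ) (s : List ℕ) :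
    subtreeAt (.node a cs) (j :: s) = (cs[j]?).bind (fun c => subtreeAt c s) := by
  cases h : cs[j]? <;> simp [subtreeAt, h]

lemma isNode_node_cons {a : α} {cs : List (RTree α)} {j : ℕ} {s : List ℕ} :
    IsNode (RTree.node a cs) (j :: s) ↔ ∃ c, cs[j]? = some c ∧ IsNode c s := by
  unfold IsNode
  rw [subtreeAt_node]
  cases h : cs[j]? <;> simp [h]

lemma isNode_nil (t : RTree α) : IsNode t [] := by
  simp [IsNode, subtreeAt]

lemma subtreeAt_append (t : RTree α) (q s : List ℕ) :
    subtreeAt t (q ++ s) = (subtreeAt t q).bind (fun u => subtreeAt u s) := by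
  induction q generalizing t with
  | nil => simp [subtreeAt]
  | cons j q ih =>
    cases t with
    | node a cs =>
      rw [cons_append, subtreeAt_node, subtreeAt_node]
      cases cs[j]? <;> simp [ih]

lemma isNode_of_prefix {t : RTree α} {w q : List ℕ} (h : IsNode t w) (hq : q <+: w) :
    IsNode t q := by
  obtain ⟨s, rfl⟩ := hq
  unfold IsNode at h ⊢
  rw [subtreeAt_append] at h
  cases h' : subtreeAt t q with
  | none => rw [h'] at h; simp at h
  | some u => simp

/-- `w` is (the path of) a node of the forest `cs`, whose trees are children
of the node with path `p`, the first one having child index `i`. -/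
def MemF (cs : List (RTree α)) (p : List ℕ) (i : ℕ) (w : List ℕ) : Prop :=
  ∃ j c s, cs[j]? = some c ∧ IsNode c s ∧ w = p ++ (i + j) :: s

lemma memF_nil (p : List ℕ) (i : ℕ) (w : List ℕ) : ¬ MemF ([] : List (RTree α)) p i w := by
  rintro ⟨j, c, s, hget, -, -⟩
  simp at hget

lemma MemF.exists_form {cs : List (RTree α)} {p : List ℕ} {i : ℕ} {w : List ℕ}
    (h : MemF cs p i w) : ∃ k s, i ≤ k ∧ w = p ++ k :: s := by
  obtain ⟨j, c, s, -, -, rfl⟩ := h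
  exact ⟨i + j, s, Nat.le_add_right _ _, rfl⟩

lemma memF_cons {a : α} {cs' ts : List (RTree α)} {p : List ℕ} {i : ℕ} {w : List ℕ} :
    MemF (RTree.node a cs' :: ts) p i w ↔
      (w = p ++ [i] ∨ MemF cs' (p ++ [i]) 0 w) ∨ MemF ts p (i + 1) w := by
  constructor
  · rintro ⟨j, c, s, hget, hnode, rfl⟩
    cases j with
    | zero =>
      simp only [getElem?_cons_zero, Option.some.injEq] at hget
      subst hget
      cases s with
      | nil => exact Or.inl (Or.inl (by simp))
      | cons m s' =>
        rw [isNode_node_cons] at hnode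
        obtain ⟨c', hget', hnode'⟩ := hnode
        refine Or.inl (Or.inr ⟨m, c', s', hget', hnode', ?_⟩)
        simp
    | succ j' =>
      refine Or.inr ⟨j', c, s, by simpa using hget, hnode, ?_⟩
      rw [show i + (j' + 1) = i + 1 + j' by omega]
  · rintro ((rfl | ⟨j, c, s, hget, hnode, rfl⟩) | ⟨j, c, s, hget, hnode, rfl⟩)
    · exact ⟨0, .node a cs', [], rfl, isNode_nil _, by simp⟩
    · refine ⟨0, .node a cs', j :: s, rfl, ?_, by simp⟩
      rw [isNode_node_cons]
      exact ⟨c, hget, hnode⟩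
    · refine ⟨j + 1, c, s, by simpa using hget, hnode, ?_⟩
      rw [show i + (j + 1) = i + 1 + j by omega]

lemma one_le_sizeL_cons (c : RTree α) (ts : List (RTree α)) : 1 ≤ sizeL (c :: ts) := by
  cases c with
  | node a cs => simp [sizeL, size] <;> omega

lemma sizeL_cons_node (a : α) (cs' ts : List (RTree α)) :
    sizeL (RTree.node a cs' :: ts) = 1 + sizeL cs' + sizeL ts := by
  simp [sizeL, size] <;> omega

/-- Membership in `ptagsL`. -/
lemma mem_ptagsL : ∀ (n : ℕ) (cs : List (RTree α)), sizeL cs ≤ n →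
    ∀ (p : List ℕ) (i : ℕ) (w : List ℕ) (b : Bool),
      ((w, b) ∈ ptagsL cs p i ↔ MemF cs p i w) := by
  intro n
  induction n with
  | zero =>
    intro cs hcs p i w b
    cases cs with
    | nil => simp [ptagsL, memF_nil]
    | cons c ts => exact absurd (le_trans (one_le_sizeL_cons c ts) hcs) (by omega)
  | succ n ih =>
    intro cs hcs p i w b
    cases cs with
    | nil => simp [ptagsL, memF_nil]
    | cons c ts =>
      cases c with
      | node a cs' =>
        rw [sizeL_cons_node] at hcs
        have h1 := ih cs' (by omega) (p ++ [i]) 0 w b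
        have h2 := ih ts (by omega) p (i + 1) w b
        simp only [ptagsL, ptags, mem_append, mem_cons, mem_singleton, Prod.mk.injEq,
          h1, h2, memF_cons]
        cases b <;> simp <;> tauto

/-- Membership in `btags` of `pfcnsL`. -/
lemma mem_btagsL : ∀ (n : ℕ) (cs : List (RTree α)), sizeL cs ≤ n →
    ∀ (p : List ℕ) (i : ℕ) (w : List ℕ) (b : Bool),
      ((w, b) ∈ (pfcnsL cs p i).btags ↔ MemF cs p i w) := by
  intro n
  induction n with
  | zero =>
    intro cs hcs p i w b
    cases cs with
    | nil => simp [pfcnsL, BTree.btags, memF_nil]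
    | cons c ts => exact absurd (le_trans (one_le_sizeL_cons c ts) hcs) (by omega)
  | succ n ih =>
    intro cs hcs p i w b
    cases cs with
    | nil => simp [pfcnsL, BTree.btags, memF_nil]
    | cons c ts =>
      cases c with
      | node a cs' =>
        rw [sizeL_cons_node] at hcs
        have h1 := ih cs' (by omega) (p ++ [i]) 0 w b
        have h2 := ih ts (by omega) p (i + 1) w b
        simp only [pfcnsL, BTree.btags, mem_append, mem_cons, mem_singleton, Prod.mk.injEq,
          h1, h2, memF_cons]
        cases b <;> simp <;> tauto

end Aux
namespace Aux
open List RTree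

variable {α : Type}

lemma not_prefix_ne_index {p : List ℕ} {i k : ℕ} {s : List ℕ} (h : i ≠ k) :
    ¬ (p ++ [i] <+: p ++ k :: s) := fun hp => h (prefix_index_eq hp)

lemma eq_append_cons {p : List ℕ} {i k : ℕ} {s : List ℕ} (h : p ++ [i] = p ++ k :: s) :
    i = k ∧ s = [] := by
  have := append_cancel_left h
  simp only [cons.injEq] at this
  exact ⟨this.1, this.2.symm⟩

/-- The order of opening tags in `ptagsL` is the lexicographic order of paths. -/
lemma lt_ptagsL : ∀ (n : ℕ) (cs : List (RTree α)), sizeL cs ≤ n →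
    ∀ (p : List ℕ) (i : ℕ) (v w : List ℕ), MemF cs p i v → MemF cs p i w → LexLt v w →
      idxOf (v, false) (ptagsL cs p i) < idxOf (w, false) (ptagsL cs p i) := by
  intro n
  induction n with
  | zero =>
    intro cs hcs p i v w hv hw _
    cases cs with
    | nil => exact absurd hv (memF_nil _ _ _)
    | cons c ts => exact absurd (le_trans (one_le_sizeL_cons c ts) hcs) (by omega)
  | succ n ih =>
    intro cs hcs p i v w hv hw hlex
    cases cs with
    | nil => exact absurd hv (memF_nil _ _ _)
    | cons c ts =>
      cases c with
      | node a cs' =>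
        rw [sizeL_cons_node] at hcs
        have hL : ptagsL (RTree.node a cs' :: ts) p i
            = ((p ++ [i], false) :: (ptagsL cs' (p ++ [i]) 0 ++ [(p ++ [i], true)]))
              ++ ptagsL ts p (i + 1) := by
          simp [ptagsL, ptags]
        rw [hL]
        rw [memF_cons] at hv hw
        have memT_of : ∀ x : List ℕ, MemF cs' (p ++ [i]) 0 x → ∀ b : Bool,
            (x, b) ∈ (p ++ [i], false) :: (ptagsL cs' (p ++ [i]) 0 ++ [(p ++ [i], true)]) := by
          intro x hx b
          exact mem_cons_of_mem _ (mem_append_left _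
            ((mem_ptagsL (sizeL cs') cs' le_rfl (p ++ [i]) 0 x b).2 hx))
        have prefT : ∀ (x : List ℕ) (b : Bool),
            (x, b) ∈ (p ++ [i], false) :: (ptagsL cs' (p ++ [i]) 0 ++ [(p ++ [i], true)]) →
            p ++ [i] <+: x := by
          intro x b hx
          rcases mem_cons.1 hx with hx | hx
          · rw [Prod.mk.injEq] at hx; rw [hx.1]
          · rcases mem_append.1 hx with hx | hx
            · obtain ⟨k, s, -, rfl⟩ :=
                ((mem_ptagsL (sizeL cs') cs' le_rfl (p ++ [i]) 0 x b).1 hx).exists_form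
              exact ⟨k :: s, rfl⟩
            · rw [mem_singleton, Prod.mk.injEq] at hx; rw [hx.1]
        have notT : ∀ (x : List ℕ) (b : Bool), MemF ts p (i + 1) x →
            (x, b) ∉ (p ++ [i], false) :: (ptagsL cs' (p ++ [i]) 0 ++ [(p ++ [i], true)]) := by
          intro x b hx hmem
          obtain ⟨k, s, hk, rfl⟩ := hx.exists_form
          exact not_prefix_ne_index (by omega) (prefT _ _ hmem)
        have memU_of : ∀ x : List ℕ, MemF ts p (i + 1) x → ∀ b : Bool,
            (x, b) ∈ ptagsL ts p (i + 1) := by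
          intro x hx b
          exact (mem_ptagsL (sizeL ts) ts le_rfl p (i + 1) x b).2 hx
        rcases hv with (rfl | hv) | hv
        · -- v = p ++ [i]
          rcases hw with (rfl | hw) | hw
          · exact absurd hlex (lexlt_irrefl _)
          · obtain ⟨k, s, -, hwe⟩ := hw.exists_form
            rw [idxOf_append_of_mem (mem_cons_self),
              idxOf_append_of_mem (memT_of _ hw false)]
            rw [idxOf_cons_self, idxOf_cons_ne]
            · exact Nat.succ_pos _
            · intro hcon
              have h2 := (congrArg Prod.fst hcon).trans hwe
              have := congrArg List.length h2
              simp at this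
          · exact idx_lt_blocks (mem_cons_self) (notT _ _ hw) (memU_of _ hw false)
        · -- v in first subtree
          obtain ⟨kv, sv, -, hve⟩ := hv.exists_form
          rcases hw with (rfl | hw) | hw
          · rw [hve] at hlex
            exact absurd hlex (not_lex_prefix (p ++ [i]) (kv :: sv))
          · -- both in first subtree
            obtain ⟨kw, sw, -, hwe⟩ := hw.exists_form
            rw [idxOf_append_of_mem (memT_of _ hv false),
              idxOf_append_of_mem (memT_of _ hw false)]
            have hvne : ((p ++ [i], false) : Tag) ≠ (v, false) := by
              intro hcon
              have h2 := (congrArg Prod.fst hcon).trans hve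
              have := congrArg List.length h2
              simp at this
            have hwne : ((p ++ [i], false) : Tag) ≠ (w, false) := by
              intro hcon
              have h2 := (congrArg Prod.fst hcon).trans hwe
              have := congrArg List.length h2
              simp at this
            rw [idxOf_cons_ne _ hvne, idxOf_cons_ne _ hwne, Nat.succ_lt_succ_iff]
            have hmv := (mem_ptagsL (sizeL cs') cs' le_rfl (p ++ [i]) 0 v false).2 hv
            have hmw := (mem_ptagsL (sizeL cs') cs' le_rfl (p ++ [i]) 0 w false).2 hw
            rw [idxOf_append_of_mem hmv, idxOf_append_of_mem hmw]
            exact ih cs' (by omega) (p ++ [i]) 0 v w hv hw hlex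
          · exact idx_lt_blocks (memT_of _ hv false) (notT _ _ hw) (memU_of _ hw false)
        · -- v in later siblings
          obtain ⟨kv, sv, hkv, hve⟩ := hv.exists_form
          rcases hw with (rfl | hw) | hw
          · rw [hve] at hlex
            exact absurd hlex (not_lex_cons_of_lt p sv [] (by omega))
          · obtain ⟨kw, sw, -, hwe⟩ := hw.exists_form
            rw [hve, hwe, append_assoc] at hlex
            exact absurd hlex (not_lex_cons_of_lt p sv _ (by omega))
          · rw [idxOf_append_of_notMem (notT _ _ hv),
              idxOf_append_of_notMem (notT _ _ hw)]
            exact Nat.add_lt_add_left (ih ts (by omega) p (i + 1) v w hv hw hlex) _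

lemma isNode_cases {a : α} {cs : List (RTree α)} {x : List ℕ}
    (h : IsNode (RTree.node a cs) x) : x = [] ∨ MemF cs [] 0 x := by
  cases x with
  | nil => exact Or.inl rfl
  | cons j s =>
    rw [isNode_node_cons] at h
    obtain ⟨c, hget, hn⟩ := h
    exact Or.inr ⟨j, c, s, hget, hn, by simp⟩

lemma tagList_eq (a : α) (cs : List (RTree α)) :
    tagList (RTree.node a cs) = ([], false) :: (ptagsL cs [] 0 ++ [([], true)]) := by
  simp [tagList, ptags]

lemma idxOf_tagList_lt {t : RTree α} {v w : List ℕ}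
    (hv : IsNode t v) (hw : IsNode t w) (hlex : LexLt v w) :
    idxOf (v, false) (tagList t) < idxOf (w, false) (tagList t) := by
  cases t with
  | node a cs =>
    rw [tagList_eq]
    rcases isNode_cases hv with rfl | hv
    · rcases isNode_cases hw with rfl | hw
      · exact absurd hlex (lexlt_irrefl _)
      · obtain ⟨k, s, -, rfl⟩ := hw.exists_form
        rw [idxOf_cons_self, idxOf_cons_ne]
        · exact Nat.succ_pos _
        · simp
    · obtain ⟨kv, sv, -, hve⟩ := hv.exists_form
      rcases isNode_cases hw with rfl | hw
      · rw [hve] at hlex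
        exact absurd hlex List.not_lex_nil
      · obtain ⟨kw, sw, -, hwe⟩ := hw.exists_form
        have hvne : (([], false) : Tag) ≠ (v, false) := by
          simp [hve]
        have hwne : (([], false) : Tag) ≠ (w, false) := by
          simp [hwe]
        rw [idxOf_cons_ne _ hvne, idxOf_cons_ne _ hwne, Nat.succ_lt_succ_iff]
        have hmv := (mem_ptagsL (sizeL cs) cs le_rfl [] 0 v false).2 hv
        have hmw := (mem_ptagsL (sizeL cs) cs le_rfl [] 0 w false).2 hw
        rw [idxOf_append_of_mem hmv, idxOf_append_of_mem hmw]
        have := lt_ptagsL (sizeL cs) cs le_rfl [] 0 v w hv hw hlex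
        exact this

/-- `posOpen` comparison is lexicographic comparison of paths. -/
lemma posOpen_lt_iff {t : RTree α} {v w : List ℕ}
    (hv : IsNode t v) (hw : IsNode t w) :
    posOpen t v < posOpen t w ↔ LexLt v w := by
  unfold posOpen
  rw [Nat.add_lt_add_iff_right]
  constructor
  · intro h
    rcases lexlt_trichotomy v w with hl | rfl | hl
    · exact hl
    · exact absurd h (lt_irrefl _)
    · exact absurd h (not_lt_of_gt (idxOf_tagList_lt hw hv hl))
  · exact idxOf_tagList_lt hv hw

lemma posOpen_le_iff {t : RTree α} {v w : List ℕ}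
    (hv : IsNode t v) (hw : IsNode t w) :
    posOpen t v ≤ posOpen t w ↔ (LexLt v w ∨ v = w) := by
  constructor
  · intro h
    rcases lexlt_trichotomy v w with hl | rfl | hl
    · exact Or.inl hl
    · exact Or.inr rfl
    · exact absurd ((posOpen_lt_iff hw hv).2 hl) (not_lt_of_ge h)
  · rintro (hl | rfl)
    · exact le_of_lt ((posOpen_lt_iff hv hw).2 hl)
    · exact le_rfl

end Aux
namespace Aux
open List RTree

variable {α : Type}

/-- Position of the closing tag of `v` vs opening tag of `w` in the FCNS tag list
of a forest. -/
lemma close_lt_btagsL : ∀ (n : ℕ) (cs : List (RTree α)), sizeL cs ≤ n →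
    ∀ (p : List ℕ) (i : ℕ) (v w : List ℕ), MemF cs p i v → MemF cs p i w →
      (idxOf (v, true) ((pfcnsL cs p i).btags) < idxOf (w, false) ((pfcnsL cs p i).btags)
        ↔ (LexLt v w ∧ ¬ v.dropLast <+: w)) := by
  intro n
  induction n with
  | zero =>
    intro cs hcs p i v w hv hw
    cases cs with
    | nil => exact absurd hv (memF_nil _ _ _)
    | cons c ts => exact absurd (le_trans (one_le_sizeL_cons c ts) hcs) (by omega)
  | succ n ih =>
    intro cs hcs p i v w hv hw
    cases cs with
    | nil => exact absurd hv (memF_nil _ _ _)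
    | cons c ts =>
      cases c with
      | node a cs' =>
        rw [sizeL_cons_node] at hcs
        have hB : (pfcnsL (RTree.node a cs' :: ts) p i).btags
            = (p ++ [i], false) :: ((pfcnsL cs' (p ++ [i]) 0).btags
                ++ ((pfcnsL ts p (i + 1)).btags ++ [(p ++ [i], true)])) := by
          simp [pfcnsL, BTree.btags, append_assoc]
        rw [hB]
        rw [memF_cons] at hv hw
        -- membership facts
        have memL : ∀ (x : List ℕ) (b : Bool), MemF cs' (p ++ [i]) 0 x →
            (x, b) ∈ (pfcnsL cs' (p ++ [i]) 0).btags :=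
          fun x b hx => (mem_btagsL (sizeL cs') cs' le_rfl _ 0 x b).2 hx
        have memR : ∀ (x : List ℕ) (b : Bool), MemF ts p (i + 1) x →
            (x, b) ∈ (pfcnsL ts p (i + 1)).btags :=
          fun x b hx => (mem_btagsL (sizeL ts) ts le_rfl _ (i + 1) x b).2 hx
        have formL : ∀ (x : List ℕ) (b : Bool), (x, b) ∈ (pfcnsL cs' (p ++ [i]) 0).btags →
            ∃ k s, x = (p ++ [i]) ++ k :: s := by
          intro x b hx
          obtain ⟨k, s, -, rfl⟩ :=
            ((mem_btagsL (sizeL cs') cs' le_rfl _ 0 x b).1 hx).exists_form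
          exact ⟨k, s, rfl⟩
        have formR : ∀ (x : List ℕ) (b : Bool), (x, b) ∈ (pfcnsL ts p (i + 1)).btags →
            ∃ k s, i + 1 ≤ k ∧ x = p ++ k :: s :=
          fun x b hx => ((mem_btagsL (sizeL ts) ts le_rfl _ (i + 1) x b).1 hx).exists_form
        have notL : ∀ (k : ℕ) (s : List ℕ) (b : Bool), i + 1 ≤ k →
            ((p ++ k :: s, b) : Tag) ∉ (pfcnsL cs' (p ++ [i]) 0).btags := by
          intro k s b hk hmem
          obtain ⟨k', s', he⟩ := formL _ _ hmem
          rw [append_assoc] at he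
          have h2 := append_cancel_left he
          simp only [cons_append, nil_append, cons.injEq] at h2
          obtain ⟨h1, -⟩ := h2
          omega
        have notLr : ∀ b : Bool, ((p ++ [i], b) : Tag) ∉ (pfcnsL cs' (p ++ [i]) 0).btags := by
          intro b hmem
          obtain ⟨k', s', he⟩ := formL _ _ hmem
          have := congrArg List.length he
          simp at this
        have notRr : ∀ b : Bool, ((p ++ [i], b) : Tag) ∉ (pfcnsL ts p (i + 1)).btags := by
          intro b hmem
          obtain ⟨k', s', hk', he⟩ := formR _ _ hmem
          obtain ⟨h1, -⟩ := eq_append_cons he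
          omega
        rcases hv with (rfl | hv) | hv
        · -- v is the head node p ++ [i]
          rw [idxOf_cons_ne _ (show ((p ++ [i], false) : Tag) ≠ (p ++ [i], true) by simp),
            idxOf_append_of_notMem (notLr true), idxOf_append_of_notMem (notRr true),
            idxOf_cons_self]
          have hRHS : ¬ (LexLt (p ++ [i]) w ∧ ¬ (p ++ [i]).dropLast <+: w) := by
            rintro ⟨-, hpre⟩
            apply hpre
            rw [dropLast_concat]
            rcases hw with (rfl | hw) | hw
            · exact ⟨[i], rfl⟩
            · obtain ⟨k, s, hwe⟩ := formL _ _ (memL _ false hw)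
              rw [hwe, append_assoc]
              exact ⟨[i] ++ k :: s, rfl⟩
            · obtain ⟨k, s, -, hwe⟩ := formR _ _ (memR _ false hw)
              rw [hwe]
              exact ⟨k :: s, rfl⟩
          refine iff_of_false ?_ hRHS
          rcases hw with (rfl | hw) | hw
          · rw [idxOf_cons_self]
            omega
          · have hm := memL _ false hw
            rw [idxOf_cons_ne _ (by
                intro hcon
                obtain ⟨k, s, hwe⟩ := formL _ _ hm
                have h2 := (congrArg Prod.fst hcon).trans hwe
                have := congrArg List.length h2
                simp at this),
              idxOf_append_of_mem hm]
            have := idxOf_lt_length_iff.2 hm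
            omega
          · have hm := memR _ false hw
            obtain ⟨k, s, hk, hwe⟩ := formR _ _ hm
            rw [idxOf_cons_ne _ (by
                intro hcon
                have h2 := (congrArg Prod.fst hcon).trans hwe
                obtain ⟨h1, -⟩ := eq_append_cons h2
                omega),
              idxOf_append_of_notMem (by rw [hwe]; exact notL _ _ _ hk),
              idxOf_append_of_mem hm]
            have := idxOf_lt_length_iff.2 hm
            omega
        · -- v in the first subtree
          obtain ⟨kv, sv, hve⟩ := formL _ _ (memL _ true hv)
          have hmv := memL _ true hv
          have hvne : ((p ++ [i], false) : Tag) ≠ (v, true) := by simp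
          rw [idxOf_cons_ne _ hvne, idxOf_append_of_mem hmv]
          have hvb := idxOf_lt_length_iff.2 hmv
          rcases hw with (rfl | hw) | hw
          · refine iff_of_false ?_ ?_
            · rw [idxOf_cons_self]
              omega
            · rintro ⟨hl, -⟩
              rw [hve] at hl
              exact absurd hl (not_lex_prefix (p ++ [i]) (kv :: sv))
          · -- both in first subtree
            have hmw := memL _ false hw
            have hwne : ((p ++ [i], false) : Tag) ≠ (w, false) := by
              intro hcon
              obtain ⟨k, s, hwe⟩ := formL _ _ hmw
              have h2 := (congrArg Prod.fst hcon).trans hwe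
              have := congrArg List.length h2
              simp at this
            rw [idxOf_cons_ne _ hwne, idxOf_append_of_mem hmw, Nat.succ_lt_succ_iff]
            exact ih cs' (by omega) (p ++ [i]) 0 v w hv hw
          · -- w in later siblings
            have hmw := memR _ false hw
            obtain ⟨kw, sw, hkw, hwe⟩ := formR _ _ hmw
            refine iff_of_true ?_ ⟨?_, ?_⟩
            · rw [idxOf_cons_ne _ (by
                  intro hcon
                  have h2 := (congrArg Prod.fst hcon).trans hwe
                  obtain ⟨h1, -⟩ := eq_append_cons h2
                  omega),
                idxOf_append_of_notMem (by rw [hwe]; exact notL _ _ _ hkw),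
                idxOf_append_of_mem hmw]
              omega
            · rw [hve, hwe, append_assoc]
              exact lex_cons_of_lt p _ _ (by omega)
            · intro hpre
              have hp1 : p ++ [i] <+: v.dropLast := by
                rw [hve, dropLast_append_of_ne_nil (cons_ne_nil kv sv)]
                exact ⟨(kv :: sv).dropLast, rfl⟩
              have := hp1.trans hpre
              rw [hwe] at this
              exact not_prefix_ne_index (by omega) this
        · -- v in later siblings
          have hmv := memR _ true hv
          obtain ⟨kv, sv, hkv, hve⟩ := formR _ _ hmv
          have hvne : ((p ++ [i], false) : Tag) ≠ (v, true) := by simp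
          rw [idxOf_cons_ne _ hvne,
            idxOf_append_of_notMem (by rw [hve]; exact notL _ _ _ hkv),
            idxOf_append_of_mem hmv]
          have hvb := idxOf_lt_length_iff.2 hmv
          rcases hw with (rfl | hw) | hw
          · refine iff_of_false ?_ ?_
            · rw [idxOf_cons_self]
              omega
            · rintro ⟨hl, -⟩
              rw [hve] at hl
              exact absurd hl (not_lex_cons_of_lt p sv [] (by omega))
          · have hmw := memL _ false hw
            obtain ⟨kw, sw, hwe⟩ := formL _ _ hmw
            refine iff_of_false ?_ ?_
            · have hwne : ((p ++ [i], false) : Tag) ≠ (w, false) := by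
                intro hcon
                have h2 := (congrArg Prod.fst hcon).trans hwe
                have := congrArg List.length h2
                simp at this
              rw [idxOf_cons_ne _ hwne, idxOf_append_of_mem hmw]
              have := idxOf_lt_length_iff.2 hmw
              omega
            · rintro ⟨hl, -⟩
              rw [hve, hwe, append_assoc] at hl
              exact absurd hl (not_lex_cons_of_lt p sv _ (by omega))
          · have hmw := memR _ false hw
            obtain ⟨kw, sw, hkw, hwe⟩ := formR _ _ hmw
            rw [idxOf_cons_ne _ (by
                intro hcon
                have h2 := (congrArg Prod.fst hcon).trans hwe
                obtain ⟨h1, -⟩ := eq_append_cons h2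
                omega),
              idxOf_append_of_notMem (by rw [hwe]; exact notL _ _ _ hkw),
              idxOf_append_of_mem hmw, Nat.succ_lt_succ_iff, Nat.add_lt_add_iff_left]
            exact ih ts (by omega) p (i + 1) v w hv hw

end Aux
namespace Aux
open List RTree

variable {α : Type}

/-- Pure path combinatorics: the "after the closed subtree" condition in terms of
an intermediate node `u`. -/
lemma pathP {t : RTree α} {v₁ v₂ : List ℕ} (h₂ : IsNode t v₂) (hroot : v₁ ≠ []) :
    (LexLt v₁ v₂ ∧ ¬ v₁.dropLast <+: v₂) ↔
      ∃ u, IsNode t u ∧ u.length + 1 ≤ v₁.length ∧ LexLt v₁ u ∧ (LexLt u v₂ ∨ u = v₂) := by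
  have hlen1 : v₁.dropLast.length = v₁.length - 1 := length_dropLast
  have hlen0 : 1 ≤ v₁.length := length_pos_iff.2 hroot
  have hdp : v₁.dropLast <+: v₁ := dropLast_prefix _
  constructor
  · rintro ⟨hlex, hnp⟩
    by_cases hl : v₂.length ≤ v₁.dropLast.length
    · exact ⟨v₂, h₂, by omega, hlex, Or.inr rfl⟩
    · push_neg at hl
      have htk : (v₂.take v₁.dropLast.length).length = v₁.dropLast.length := by
        rw [length_take]; omega
      refine ⟨v₂.take v₁.dropLast.length, isNode_of_prefix h₂ (take_prefix _ _), by omega, ?_,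
        Or.inl ?_⟩
      · rcases (lex_char v₁ v₂).1 hlex with ⟨hpre, -⟩ | ⟨q, i, j, hij, h1q, h2q⟩
        · exact absurd (hdp.trans hpre) hnp
        · have hq1 : q.length + 1 ≤ v₁.length := by simpa using h1q.length_le
          by_cases hqp : q.length + 1 ≤ v₁.dropLast.length
          · have hju : q ++ [j] <+: v₂.take v₁.dropLast.length :=
              prefix_of_prefix_length_le h2q (take_prefix _ _) (by simp [htk]; omega)
            exact (lex_char _ _).2 (Or.inr ⟨q, i, j, hij, h1q, hju⟩)
          · have hqv : q <+: v₁ := (prefix_append q [i]).trans h1q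
            have hq : q = v₁.dropLast :=
              same_length_prefix_eq hqv hdp (by omega)
            have hqv₂ : q <+: v₂ := (prefix_append q [j]).trans h2q
            rw [hq] at hqv₂
            exact absurd hqv₂ hnp
      · refine (lex_char _ _).2 (Or.inl ⟨take_prefix _ _, fun hcon => ?_⟩)
        have := congrArg List.length hcon
        rw [htk] at this
        omega
  · rintro ⟨u, hu, hulen, h1, h2⟩
    have hv12 : LexLt v₁ v₂ := by
      rcases h2 with hl2 | rfl
      · exact lexlt_trans h1 hl2
      · exact h1
    refine ⟨hv12, fun hpv => ?_⟩
    rcases (lex_char v₁ u).1 h1 with ⟨hpre, -⟩ | ⟨q, i, j, hij, h1q, h2q⟩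
    · exact absurd hpre.length_le (by omega)
    · have hq1 : q.length + 1 ≤ u.length := by simpa using h2q.length_le
      have hqi_p : q ++ [i] <+: v₁.dropLast :=
        prefix_of_prefix_length_le h1q hdp (by simp; omega)
      have hqi_v2 : q ++ [i] <+: v₂ := hqi_p.trans hpv
      have hqu : q <+: u := (prefix_append q [j]).trans h2q
      rcases h2 with hl2 | rfl
      · rcases (lex_char u v₂).1 hl2 with ⟨hpre2, -⟩ | ⟨q', i', j', hij', h1'q, h2'q⟩
        · exact absurd (prefix_index_unique hqi_v2 (h2q.trans hpre2)) (by omega)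
        · have hq'1 : q'.length + 1 ≤ u.length := by simpa using h1'q.length_le
          have hq'u : q' <+: u := (prefix_append q' [i']).trans h1'q
          rcases lt_trichotomy q.length q'.length with hc | hc | hc
          · have hqj : q ++ [j] <+: q' :=
              prefix_of_prefix_length_le h2q hq'u (by simp; omega)
            have : q ++ [j] <+: v₂ := hqj.trans ((prefix_append q' [j']).trans h2'q)
            exact absurd (prefix_index_unique hqi_v2 this) (by omega)
          · have hqq : q = q' := same_length_prefix_eq hqu hq'u hc
            subst hqq
            have hji' : j = i' := prefix_index_unique h2q h1'q
            have hij'' : i = j' := prefix_index_unique hqi_v2 h2'q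
            omega
          · have hq'i : q' ++ [i'] <+: q :=
              prefix_of_prefix_length_le h1'q hqu (by simp; omega)
            have : q' ++ [i'] <+: v₂ := hq'i.trans ((prefix_append q [i]).trans hqi_v2)
            exact absurd (prefix_index_unique this h2'q) (by omega)
      · exact absurd (prefix_index_unique hqi_v2 h2q) (by omega)

end Aux

open Aux List in
theorem posClose'_lt_posOpen'_iff' {α : Type} (t : RTree α) (v₁ v₂ : List ℕ)
    (h₁ : RTree.IsNode t v₁) (h₂ : RTree.IsNode t v₂) (hroot : v₁ ≠ []) :
    (RTree.posClose' t v₁ < RTree.posOpen' t v₂ ↔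
      ∃ u, RTree.IsNode t u ∧ u.length + 1 ≤ v₁.length ∧
        RTree.posOpen t v₁ < RTree.posOpen t u ∧
        RTree.posOpen t u ≤ RTree.posOpen t v₂) ∧
    (RTree.posClose' t v₁ < RTree.posOpen' t v₂ ↔
      (RTree.posOpen t v₁ < RTree.posOpen t v₂ ∧ ¬ (v₁.dropLast <+: v₂))) := by
  have key2 : RTree.posClose' t v₁ < RTree.posOpen' t v₂ ↔
      (LexLt v₁ v₂ ∧ ¬ v₁.dropLast <+: v₂) := by
    cases t with
    | node a cs =>
      have hbt : RTree.btagList (RTree.node a cs)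
          = ([], false) :: ((RTree.pfcnsL cs [] 0).btags ++ [([], true)]) := by
        simp [RTree.btagList, RTree.pfcns, BTree.btags]
      unfold RTree.posClose' RTree.posOpen'
      rw [Nat.add_lt_add_iff_right]
      rw [hbt]
      have hv₁ : MemF cs [] 0 v₁ := (isNode_cases h₁).resolve_left hroot
      rcases isNode_cases h₂ with rfl | hv₂
      · refine iff_of_false ?_ ?_
        · rw [idxOf_cons_self]
          omega
        · rintro ⟨hl, -⟩
          exact absurd hl List.not_lex_nil
      · obtain ⟨k2, s2, -, h2e⟩ := hv₂.exists_form
        have hm1 : (v₁, true) ∈ (RTree.pfcnsL cs [] 0).btags :=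
          (mem_btagsL (RTree.sizeL cs) cs le_rfl [] 0 v₁ true).2 hv₁
        have hm2 : (v₂, false) ∈ (RTree.pfcnsL cs [] 0).btags :=
          (mem_btagsL (RTree.sizeL cs) cs le_rfl [] 0 v₂ false).2 hv₂
        rw [idxOf_cons_ne _ (show (([], false) : Tag) ≠ (v₁, true) by simp),
          idxOf_cons_ne _ (show (([], false) : Tag) ≠ (v₂, false) by
            intro hcon
            have h3 := (congrArg Prod.fst hcon).trans h2e
            simp at h3),
          Nat.succ_lt_succ_iff, idxOf_append_of_mem hm1, idxOf_append_of_mem hm2]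
        have := close_lt_btagsL (RTree.sizeL cs) cs le_rfl [] 0 v₁ v₂ hv₁ hv₂
        exact this
  constructor
  · rw [key2, pathP h₂ hroot]
    constructor
    · rintro ⟨u, hu, hlen, hl1, hl2⟩
      exact ⟨u, hu, hlen, (posOpen_lt_iff h₁ hu).2 hl1, (posOpen_le_iff hu h₂).2 hl2⟩
    · rintro ⟨u, hu, hlen, hp1, hp2⟩
      exact ⟨u, hu, hlen, (posOpen_lt_iff h₁ hu).1 hp1, (posOpen_le_iff hu h₂).1 hp2⟩
  · rw [key2]
    constructor
    · rintro ⟨hl, hp⟩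
      exact ⟨(posOpen_lt_iff h₁ h₂).2 hl, hp⟩
    · rintro ⟨hl, hp⟩
      exact ⟨(posOpen_lt_iff h₁ h₂).1 hl, hp⟩

/-- For a non-root node `v₁` of `t` with parent `p` and any node
`v₂` of `t`: `pos'(v̄₁) < pos'(v₂)` iff there is a node `u` of `t` with
`depth(u) ≤ depth(v₁) − 1` and `pos(v₁) < pos(u) ≤ pos(v₂)`; equivalently, iff
`pos(v₁) < pos(v₂)` and `v₂` does not lie in the subtree of `p` in `t`. -/
theorem posClose'_lt_posOpen'_iff {α : Type} (t : RTree α) (v₁ v₂ : List ℕ)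
    (h₁ : RTree.IsNode t v₁) (h₂ : RTree.IsNode t v₂) (hroot : v₁ ≠ []) :
    (RTree.posClose' t v₁ < RTree.posOpen' t v₂ ↔
      ∃ u, RTree.IsNode t u ∧ u.length + 1 ≤ v₁.length ∧
        RTree.posOpen t v₁ < RTree.posOpen t u ∧
        RTree.posOpen t u ≤ RTree.posOpen t v₂) ∧
    (RTree.posClose' t v₁ < RTree.posOpen' t v₂ ↔
      (RTree.posOpen t v₁ < RTree.posOpen t v₂ ∧ ¬ (v₁.dropLast <+: v₂))) := by
  exact posClose'_lt_posOpen'_iff' t v₁ v₂ h₁ h₂ hroot
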